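/- There exists a universal constant K such that the following holds for all ε, δ ∈ (0, 1/2) and all integers d' dividing d with d' ≥ K · ε^{−2} · log(1/δ). Let R be a random d×d orthogonal matrix distributed according to Haar measure on the orthogonal group O(d), and for each i = 1, …, d/d' let P_i be the d'×d matrix consisting of rows (i−1)d' + 1 through i·d' of R. Then {P_i}_{i=1}^{d/d'} is almost surely an orthogonal decomposition of ℝ^d into ℝ^{d'}, and for every x ∈ ℝ^d with ‖x‖₂ = 1 and every i, ℙ( |√(d/d') · ‖P_i x‖₂ − 1| > ε ) < δ. -/

import Mathlib

open MeasureTheory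

/-- The `i`-th block of `d'` consecutive rows of a `d×d` matrix `R` (given as `R : Fin d →
Fin d → ℝ`): rows `i·d'` through `i·d' + d' − 1` in 0-indexed notation, i.e. rows
`(i−1)d' + 1` through `i·d'` 1-indexed. -/
def rowBlock (d d' : ℕ) (hdvd : d' ∣ d) (R : Fin d → Fin d → ℝ)
    (i : Fin (d / d')) : Fin d' → Fin d → ℝ :=
  fun a j => R ⟨i.val * d' + a.val, by
    have h1 : (i.val + 1) * d' ≤ (d / d') * d' :=
      Nat.mul_le_mul_right d' (Nat.succ_le_of_lt i.isLt)
    have h2 : (d / d') * d' = d := Nat.div_mul_cancel hdvd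
    have ha : a.val < d' := a.isLt
    calc i.val * d' + a.val < (i.val + 1) * d' := by nlinarith
      _ ≤ d := by rw [h2] at h1; exact h1⟩ j

/-- `{P_i}_{i=1}^{d/d'}` is an orthogonal decomposition of `ℝ^d` into `ℝ^{d'}`: the set of all
rows of the `P_i` forms an orthonormal basis of `ℝ^d` (equivalently, since there are exactly
`(d/d')·d' = d` rows, the rows are pairwise orthonormal). -/
def IsOrthDecomp (d d' : ℕ) (P : Fin (d / d') → Fin d' → Fin d → ℝ) : Prop :=
  ∀ (i : Fin (d / d')) (a : Fin d') (j : Fin (d / d')) (b : Fin d'),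
    (∑ t, P i a t * P j b t) = if i = j ∧ a = b then 1 else 0

namespace HBDG

open Real Finset Topology Filter

variable {d : ℕ}

lemma sum_pair {t s : Fin d} (hts : t ≠ s) (f : Fin d → ℝ)
    (hf : ∀ u, u ≠ t → u ≠ s → f u = 0) : ∑ u, f u = f t + f s :=
  Finset.sum_eq_add_of_mem t s (Finset.mem_univ t) (Finset.mem_univ s) hts
    (fun u _ hu => hf u hu.1 hu.2)

/-- Givens rotation matrix in coordinates `t, s` by angle `θ`. -/
noncomputable def givens (t s : Fin d) (θ : ℝ) : Fin d → Fin d → ℝ := fun p q =>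
  if p = t then (if q = t then Real.cos θ else if q = s then -Real.sin θ else 0)
  else if p = s then (if q = t then Real.sin θ else if q = s then Real.cos θ else 0)
  else (if q = p then 1 else 0)

lemma givens_delta {t s p : Fin d} (θ : ℝ) (hpt : p ≠ t) (hps : p ≠ s) (q : Fin d) :
    givens t s θ p q = if q = p then 1 else 0 := by
  simp [givens, hpt, hps]

lemma givens_orth {t s : Fin d} (hts : t ≠ s) (θ : ℝ) (p q : Fin d) :
    (∑ u, givens t s θ p u * givens t s θ q u) = if p = q then (1:ℝ) else 0 := by
  have hst : s ≠ t := hts.symm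
  rcases eq_or_ne p t with hpt | hpt
  · subst hpt
    rcases eq_or_ne q p with hqp | hqp
    · subst hqp
      rw [sum_pair hts _ (fun u hut hus => by simp [givens, hut, hus])]
      simp [givens, hts, hst]
      nlinarith [Real.sin_sq_add_cos_sq θ]
    · rcases eq_or_ne q s with hqs | hqs
      · subst hqs
        rw [sum_pair hts _ (fun u hut hus => by simp [givens, hut, hus])]
        simp [givens, hts, hst, hqp]
        ring
      · simp only [givens_delta θ hqp hqs, mul_ite, mul_one, mul_zero,
          Finset.sum_ite_eq', Finset.mem_univ, if_true]
        simp [givens, Ne.symm hqp, Ne.symm hqs, hqp, hqs]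
  · rcases eq_or_ne p s with hps | hps
    · subst hps
      rcases eq_or_ne q t with hqt | hqt
      · subst hqt
        rw [sum_pair hts _ (fun u hut hus => by simp [givens, hut, hus])]
        simp [givens, hts, hst, hpt]
        ring
      · rcases eq_or_ne q p with hqp | hqp
        · subst hqp
          rw [sum_pair hts _ (fun u hut hus => by simp [givens, hut, hus])]
          simp [givens, hts, hst]
          nlinarith [Real.sin_sq_add_cos_sq θ]
        · simp only [givens_delta θ hqt hqp, mul_ite, mul_one, mul_zero,
            Finset.sum_ite_eq', Finset.mem_univ, if_true]
          simp [givens, Ne.symm hqt, Ne.symm hqp, hqt, hqp]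
    · rcases eq_or_ne q t with hqt | hqt
      · subst hqt
        simp only [givens_delta θ hpt hps, ite_mul, one_mul, zero_mul,
          Finset.sum_ite_eq', Finset.mem_univ, if_true]
        simp [givens, Ne.symm hpt, Ne.symm hps, hpt, hps]
      · rcases eq_or_ne q s with hqs | hqs
        · subst hqs
          simp only [givens_delta θ hpt hps, ite_mul, one_mul, zero_mul,
            Finset.sum_ite_eq', Finset.mem_univ, if_true]
          simp [givens, Ne.symm hpt, Ne.symm hps, hpt, hps, hts, hst]
        · simp only [givens_delta θ hpt hps, givens_delta θ hqt hqs, ite_mul, one_mul, zero_mul,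
            mul_ite, mul_one, mul_zero]
          simp only [Finset.sum_ite_eq', Finset.mem_univ, if_true]
          by_cases h : p = q
          · simp [h]
          · rw [if_neg (fun h2 => h h2.symm), if_neg h]

lemma givens_apply {t s : Fin d} (hts : t ≠ s) (θ : ℝ) (z : Fin d → ℝ) (p : Fin d) :
    (∑ q, givens t s θ p q * z q) =
      if p = t then Real.cos θ * z t - Real.sin θ * z s
      else if p = s then Real.sin θ * z t + Real.cos θ * z s
      else z p := by
  rcases eq_or_ne p t with hpt | hpt
  · subst hpt
    rw [sum_pair hts _ (fun u hut hus => by simp [givens, hut, hus])]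
    simp [givens, hts, hts.symm]
    ring
  · rcases eq_or_ne p s with hps | hps
    · subst hps
      rw [sum_pair hts _ (fun u hut hus => by simp [givens, hut, hus])]
      simp [givens, hts, hts.symm, hpt]
    · simp only [givens_delta θ hpt hps, ite_mul, one_mul, zero_mul,
        Finset.sum_ite_eq', Finset.mem_univ, if_true, if_neg hpt, if_neg hps]



noncomputable def Sf (B : Finset (Fin d)) (z : Fin d → ℝ) : ℝ := ∑ t ∈ B, (z t)^2

lemma continuous_Sf (B : Finset (Fin d)) : Continuous (Sf B) :=
  continuous_finset_sum _ fun t _ => ((continuous_apply t).pow 2)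

lemma measurable_Sf (B : Finset (Fin d)) : Measurable (Sf B) := (continuous_Sf B).measurable

variable {ν : Measure (Fin d → ℝ)} [IsProbabilityMeasure ν] {B : Finset (Fin d)}

lemma integrable_bdd {f : (Fin d → ℝ) → ℝ} (hm : AEStronglyMeasurable f ν) {C : ℝ}
    (h : ∀ᵐ z ∂ν, |f z| ≤ C) : Integrable f ν :=
  (integrable_const C).mono' hm (by simpa [Real.norm_eq_abs] using h)

lemma pair_stein (hsph : ∀ᵐ z ∂ν, ∑ u, (z u)^2 = 1)
    (hinv : ∀ Q : Fin d → Fin d → ℝ,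
      (∀ p q, (∑ u, Q p u * Q q u) = if p = q then (1:ℝ) else 0) →
      Measure.map (fun z p => ∑ q, Q p q * z q) ν = ν)
    {t s : Fin d} (ht : t ∈ B) (hs : s ∉ B) (c : ℝ) :
    ∫ z, ((z t ^ 2 - z s ^ 2) - 2 * c * (z t ^ 2 * z s ^ 2)) * Real.exp (c * Sf B z) ∂ν = 0 := by
  have hts : t ≠ s := fun h => hs (h ▸ ht)
  set A : ℝ → (Fin d → ℝ) → ℝ := fun θ z => Real.cos θ * z t - Real.sin θ * z s with hA
  set Bf : ℝ → (Fin d → ℝ) → ℝ := fun θ z => Real.sin θ * z t + Real.cos θ * z s with hBf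
  set G : ℝ → (Fin d → ℝ) → ℝ :=
    fun θ z => A θ z * Bf θ z * Real.exp (c * (Sf B z - z t ^ 2 + A θ z ^ 2)) with hG
  set D : ℝ → (Fin d → ℝ) → ℝ :=
    fun θ z => ((A θ z ^ 2 - Bf θ z ^ 2) - 2 * c * (A θ z ^ 2 * Bf θ z ^ 2)) *
      Real.exp (c * (Sf B z - z t ^ 2 + A θ z ^ 2)) with hD
  set Cc : ℝ := (1 + 2*|c|) * Real.exp (2*|c|) with hCc
  -- continuity facts
  have hGcont : ∀ θ, Continuous (G θ) := by
    intro θ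
    apply Continuous.mul
    · exact ((continuous_const.mul (continuous_apply t)).sub
          (continuous_const.mul (continuous_apply s))).mul
        ((continuous_const.mul (continuous_apply t)).add
          (continuous_const.mul (continuous_apply s)))
    · exact Real.continuous_exp.comp (continuous_const.mul (((continuous_Sf B).sub
        ((continuous_apply t).pow 2)).add
        (((continuous_const.mul (continuous_apply t)).sub
          (continuous_const.mul (continuous_apply s))).pow 2)))
  -- pointwise sphere facts
  have sphere_facts : ∀ z : Fin d → ℝ, (∑ u, (z u)^2 = 1) → ∀ θ,
      A θ z ^ 2 + Bf θ z ^ 2 ≤ 1 ∧ 0 ≤ Sf B z - z t ^ 2 + A θ z ^ 2 ∧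
        Sf B z - z t ^ 2 + A θ z ^ 2 ≤ 2 := by
    intro z hz θ
    have h1 : z t ^ 2 + z s ^ 2 ≤ 1 := by
      have := Finset.sum_le_sum_of_subset_of_nonneg
        (Finset.subset_univ ({t, s} : Finset (Fin d))) (fun u _ _ => sq_nonneg (z u))
      rw [hz] at this
      calc z t ^2 + z s ^2 = ∑ u ∈ ({t, s} : Finset (Fin d)), (z u)^2 := by
            rw [Finset.sum_pair hts]
        _ ≤ 1 := this
    have hab : A θ z ^ 2 + Bf θ z ^ 2 = z t ^ 2 + z s ^ 2 := by
      simp only [hA, hBf]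
      nlinarith [Real.sin_sq_add_cos_sq θ]
    have hSf1 : Sf B z ≤ 1 := by
      have := Finset.sum_le_sum_of_subset_of_nonneg
        (Finset.subset_univ B) (fun u _ _ => sq_nonneg (z u))
      rw [hz] at this; exact this
    have hSft : z t ^ 2 ≤ Sf B z := Finset.single_le_sum (fun u _ => sq_nonneg (z u)) ht
    have ha1 : A θ z ^ 2 ≤ 1 := by nlinarith [sq_nonneg (Bf θ z)]
    exact ⟨hab ▸ h1, by nlinarith [sq_nonneg (A θ z)], by nlinarith⟩
  -- pointwise bounds on G and D on the sphere
  have hDbd : ∀ z : Fin d → ℝ, (∑ u, (z u)^2 = 1) → ∀ θ, |D θ z| ≤ Cc := by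
    intro z hz θ
    obtain ⟨hab, hlo, hhi⟩ := sphere_facts z hz θ
    have hE : Real.exp (c * (Sf B z - z t ^ 2 + A θ z ^ 2)) ≤ Real.exp (2*|c|) := by
      apply Real.exp_le_exp.mpr
      calc c * (Sf B z - z t ^ 2 + A θ z ^ 2) ≤ |c| * (Sf B z - z t ^ 2 + A θ z ^ 2) := by
            exact mul_le_mul_of_nonneg_right (le_abs_self c) hlo
        _ ≤ |c| * 2 := mul_le_mul_of_nonneg_left hhi (abs_nonneg c)
        _ = 2 * |c| := by ring
    have hEpos : (0:ℝ) < Real.exp (c * (Sf B z - z t ^ 2 + A θ z ^ 2)) := Real.exp_pos _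
    have h2 : |(A θ z ^ 2 - Bf θ z ^ 2) - 2 * c * (A θ z ^ 2 * Bf θ z ^ 2)| ≤ 1 + 2*|c| := by
      have ha : A θ z ^2 ≤ 1 := by nlinarith [sq_nonneg (Bf θ z)]
      have hb : Bf θ z ^2 ≤ 1 := by nlinarith [sq_nonneg (A θ z)]
      have habs : |A θ z ^ 2 - Bf θ z ^ 2| ≤ 1 := by
        rw [abs_le]; constructor <;> nlinarith [sq_nonneg (A θ z), sq_nonneg (Bf θ z)]
      have habs2 : |2 * c * (A θ z ^ 2 * Bf θ z ^ 2)| ≤ 2 * |c| := by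
        rw [abs_mul, abs_mul]
        have : |A θ z ^ 2 * Bf θ z ^ 2| ≤ 1 := by
          rw [abs_mul]
          have := abs_sq (A θ z); have := abs_sq (Bf θ z)
          calc |A θ z ^2| * |Bf θ z ^2| = A θ z ^2 * Bf θ z ^2 := by
                rw [abs_of_nonneg (sq_nonneg _), abs_of_nonneg (sq_nonneg _)]
            _ ≤ 1 := by nlinarith [sq_nonneg (A θ z), sq_nonneg (Bf θ z)]
        calc |2| * |c| * |A θ z ^ 2 * Bf θ z ^ 2| ≤ |2| * |c| * 1 := by
              apply mul_le_mul_of_nonneg_left this (by positivity)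
          _ = 2 * |c| := by simp [abs_of_nonneg]
      calc |(A θ z ^ 2 - Bf θ z ^ 2) - 2 * c * (A θ z ^ 2 * Bf θ z ^ 2)|
          ≤ |A θ z ^ 2 - Bf θ z ^ 2| + |2 * c * (A θ z ^ 2 * Bf θ z ^ 2)| := abs_sub _ _
        _ ≤ 1 + 2*|c| := add_le_add habs habs2
    calc |D θ z| = |(A θ z ^ 2 - Bf θ z ^ 2) - 2 * c * (A θ z ^ 2 * Bf θ z ^ 2)| *
          |Real.exp (c * (Sf B z - z t ^ 2 + A θ z ^ 2))| := abs_mul _ _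
      _ ≤ (1 + 2*|c|) * Real.exp (2*|c|) := by
          apply mul_le_mul h2 (by rwa [abs_of_pos hEpos]) (abs_nonneg _) (by positivity)
  have hGbd : ∀ z : Fin d → ℝ, (∑ u, (z u)^2 = 1) → ∀ θ, |G θ z| ≤ Real.exp (2*|c|) := by
    intro z hz θ
    obtain ⟨hab, hlo, hhi⟩ := sphere_facts z hz θ
    have hE : Real.exp (c * (Sf B z - z t ^ 2 + A θ z ^ 2)) ≤ Real.exp (2*|c|) := by
      apply Real.exp_le_exp.mpr
      calc c * (Sf B z - z t ^ 2 + A θ z ^ 2) ≤ |c| * (Sf B z - z t ^ 2 + A θ z ^ 2) :=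
            mul_le_mul_of_nonneg_right (le_abs_self c) hlo
        _ ≤ |c| * 2 := mul_le_mul_of_nonneg_left hhi (abs_nonneg c)
        _ = 2 * |c| := by ring
    have h1 : |A θ z * Bf θ z| ≤ 1 := by
      rw [abs_mul, ← Real.sqrt_sq_eq_abs, ← Real.sqrt_sq_eq_abs, ← Real.sqrt_mul (sq_nonneg _)]
      rw [show (1:ℝ) = Real.sqrt 1 by simp]
      apply Real.sqrt_le_sqrt
      nlinarith [sq_nonneg (A θ z - Bf θ z), sq_nonneg (A θ z + Bf θ z), sq_nonneg (A θ z),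
        sq_nonneg (Bf θ z)]
    calc |G θ z| = |A θ z * Bf θ z| * |Real.exp (c * (Sf B z - z t ^ 2 + A θ z ^ 2))| := by
          rw [hG]; rw [abs_mul]
      _ ≤ 1 * Real.exp (2*|c|) := by
          apply mul_le_mul h1 (by rwa [abs_of_pos (Real.exp_pos _)]) (abs_nonneg _) zero_le_one
      _ = Real.exp (2*|c|) := one_mul _
  -- invariance: the integral of G θ is independent of θ
  have hkey : ∀ θ : ℝ, ∫ z, G θ z ∂ν = ∫ z, G 0 z ∂ν := by
    intro θ
    have hsm : AEStronglyMeasurable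
        (fun w : Fin d → ℝ => w t * w s * Real.exp (c * Sf B w)) ν :=
      (((continuous_apply t).mul (continuous_apply s)).mul
        (Real.continuous_exp.comp (continuous_const.mul (continuous_Sf B)))).aestronglyMeasurable
    have hLmeas : Measurable (fun z : Fin d → ℝ => fun p => ∑ q, givens t s θ p q * z q) :=
      measurable_pi_lambda _ fun p => Finset.measurable_sum _ fun q _ =>
        (measurable_pi_apply q).const_mul _
    have hmap := hinv (givens t s θ) (givens_orth hts θ)
    have hG0 : ∀ z : Fin d → ℝ, G 0 z = z t * z s * Real.exp (c * Sf B z) := by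
      intro z
      simp only [hG, hA, hBf, Real.cos_zero, Real.sin_zero]
      ring_nf
    have hcomp : ∀ z : Fin d → ℝ,
        (fun w : Fin d → ℝ => w t * w s * Real.exp (c * Sf B w))
          (fun p => ∑ q, givens t s θ p q * z q) = G θ z := by
      intro z
      have hLt : (∑ q, givens t s θ t q * z q) = A θ z := by
        rw [givens_apply hts]; simp [hA]
      have hLs : (∑ q, givens t s θ s q * z q) = Bf θ z := by
        rw [givens_apply hts]; simp [hBf, hts.symm, hts]
      have hLS : Sf B (fun p => ∑ q, givens t s θ p q * z q)
          = Sf B z - z t ^ 2 + A θ z ^ 2 := by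
        unfold Sf
        have step : ∀ u ∈ B, ((fun p => ∑ q, givens t s θ p q * z q) u)^2
            = (if u = t then A θ z else z u)^2 := by
          intro u hu
          have hus : u ≠ s := fun h => hs (h ▸ hu)
          simp only
          rw [givens_apply hts]
          rcases eq_or_ne u t with h|h
          · simp [h, hA]
          · simp [h, hus]
        rw [Finset.sum_congr rfl step]
        have e1 : ∑ u ∈ B, (if u = t then A θ z else z u)^2
            = (∑ u ∈ B.erase t, (z u)^2) + A θ z ^2 := by
          rw [← Finset.sum_erase_add _ _ ht, if_pos rfl]
          congr 1
          exact Finset.sum_congr rfl fun u hu => by rw [if_neg (Finset.ne_of_mem_erase hu)]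
        have e2 : ∑ u ∈ B.erase t, (z u)^2 = (∑ u ∈ B, (z u)^2) - z t ^2 := by
          rw [eq_sub_iff_add_eq, Finset.sum_erase_add _ _ ht]
        rw [e1, e2]
      simp only
      rw [hLt, hLs, hLS]
    calc ∫ z, G θ z ∂ν
        = ∫ z, (fun w : Fin d → ℝ => w t * w s * Real.exp (c * Sf B w))
            (fun p => ∑ q, givens t s θ p q * z q) ∂ν :=
          integral_congr_ae (Filter.Eventually.of_forall fun z => (hcomp z).symm)
      _ = ∫ w, w t * w s * Real.exp (c * Sf B w)
            ∂(Measure.map (fun z (p : Fin d) => ∑ q, givens t s θ p q * z q) ν) :=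
          (integral_map hLmeas.aemeasurable (by rw [hmap]; exact hsm)).symm
      _ = ∫ w, w t * w s * Real.exp (c * Sf B w) ∂ν := by rw [hmap]
      _ = ∫ z, G 0 z ∂ν :=
          integral_congr_ae (Filter.Eventually.of_forall fun z => (hG0 z).symm)
  -- pointwise derivative in θ
  have hasD : ∀ (θ : ℝ) (z : Fin d → ℝ), HasDerivAt (fun θ => G θ z) (D θ z) θ := by
    intro θ z
    have hA' : HasDerivAt (fun θ => A θ z) (-Bf θ z) θ := by
      have := ((Real.hasDerivAt_cos θ).mul_const (z t)).sub
        ((Real.hasDerivAt_sin θ).mul_const (z s))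
      refine this.congr_deriv ?_
      simp [hBf]; ring
    have hB' : HasDerivAt (fun θ => Bf θ z) (A θ z) θ := by
      have := ((Real.hasDerivAt_sin θ).mul_const (z t)).add
        ((Real.hasDerivAt_cos θ).mul_const (z s))
      refine this.congr_deriv ?_
      simp [hA]; ring
    have h2 : HasDerivAt (fun θ => A θ z ^ 2) (2 * A θ z * -Bf θ z) θ := by
      have := hA'.pow 2
      refine this.congr_deriv ?_; ring
    have hQ : HasDerivAt (fun θ => c * (Sf B z - z t ^ 2 + A θ z ^ 2))
        (c * (2 * A θ z * -Bf θ z)) θ :=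
      (h2.const_add (Sf B z - z t ^ 2)).const_mul c
    have hE : HasDerivAt (fun θ => Real.exp (c * (Sf B z - z t ^ 2 + A θ z ^ 2)))
        (Real.exp (c * (Sf B z - z t ^ 2 + A θ z ^ 2)) * (c * (2 * A θ z * -Bf θ z))) θ := hQ.exp
    have htot := (hA'.mul hB').mul hE
    refine htot.congr_deriv ?_
    simp only [hD, Pi.mul_apply]
    ring
  -- mean value bound
  have hslope : ∀ z : Fin d → ℝ, (∑ u, (z u)^2 = 1) → ∀ θ ∈ Set.Icc (0:ℝ) 1,
      |G θ z - G 0 z| ≤ Cc * θ := by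
    intro z hz θ hθ
    have key := (convex_Icc (0:ℝ) 1).norm_image_sub_le_of_norm_hasDerivWithin_le
      (f := fun θ => G θ z) (f' := fun θ => D θ z) (C := Cc)
      (fun x _ => (hasD x z).hasDerivWithinAt)
      (fun x _ => by rw [Real.norm_eq_abs]; exact hDbd z hz x)
      (Set.mem_Icc.mpr ⟨le_refl 0, zero_le_one⟩) hθ
    rw [Real.norm_eq_abs] at key
    calc |G θ z - G 0 z| ≤ Cc * ‖θ - 0‖ := key
      _ = Cc * θ := by rw [sub_zero, Real.norm_eq_abs, abs_of_nonneg hθ.1]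
  -- dominated convergence of difference quotients
  have hCc0 : (0:ℝ) ≤ Cc := by positivity
  set θn : ℕ → ℝ := fun n => 1/(n+1) with hθn
  have hθpos : ∀ n, 0 < θn n := fun n => by positivity
  have hθle : ∀ n, θn n ≤ 1 := by
    intro n
    rw [hθn]
    rw [div_le_one (by positivity)]
    simp
  set Fn : ℕ → (Fin d → ℝ) → ℝ := fun n z => (θn n)⁻¹ * (G (θn n) z - G 0 z) with hFn
  have hGint : ∀ θ, Integrable (G θ) ν :=
    fun θ => integrable_bdd (hGcont θ).aestronglyMeasurable
      (hsph.mono fun z hz => hGbd z hz θ)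
  have hFnint0 : ∀ n, ∫ z, Fn n z ∂ν = 0 := by
    intro n
    simp only [hFn]
    rw [integral_const_mul, integral_sub (hGint _) (hGint _), hkey (θn n), sub_self, mul_zero]
  have hFnmeas : ∀ n, AEStronglyMeasurable (Fn n) ν := fun n =>
    (continuous_const.mul ((hGcont _).sub (hGcont 0))).aestronglyMeasurable
  have hFnbd : ∀ n, ∀ᵐ z ∂ν, ‖Fn n z‖ ≤ Cc := by
    intro n
    filter_upwards [hsph] with z hz
    rw [Real.norm_eq_abs, hFn]
    simp only
    rw [abs_mul, abs_inv, abs_of_pos (hθpos n)]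
    have h1 := hslope z hz (θn n) ⟨(hθpos n).le, hθle n⟩
    calc (θn n)⁻¹ * |G (θn n) z - G 0 z| ≤ (θn n)⁻¹ * (Cc * θn n) :=
        mul_le_mul_of_nonneg_left h1 (by positivity)
      _ = Cc := by rw [mul_comm Cc, ← mul_assoc, inv_mul_cancel₀ (hθpos n).ne', one_mul]
  have hlim : ∀ᵐ z ∂ν, Filter.Tendsto (fun n => Fn n z) Filter.atTop (𝓝 (D 0 z)) := by
    refine Filter.Eventually.of_forall fun z => ?_
    have hd := hasD 0 z
    rw [hasDerivAt_iff_tendsto_slope] at hd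
    have htend : Filter.Tendsto θn Filter.atTop (𝓝[≠] (0:ℝ)) := by
      apply tendsto_nhdsWithin_of_tendsto_nhds_of_eventually_within
      · exact tendsto_one_div_add_atTop_nhds_zero_nat
      · exact Filter.Eventually.of_forall fun n => (hθpos n).ne'
    refine (hd.comp htend).congr fun n => ?_
    simp only [Function.comp_apply]
    rw [slope_def_field, sub_zero, div_eq_inv_mul]
  have hconv := tendsto_integral_of_dominated_convergence (fun _ => Cc) hFnmeas
    (integrable_const Cc) hFnbd hlim
  have h0 : Filter.Tendsto (fun _ : ℕ => (0:ℝ)) Filter.atTop (𝓝 (∫ z, D 0 z ∂ν)) :=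
    hconv.congr fun n => hFnint0 n
  have hD0 : ∫ z, D 0 z ∂ν = 0 := tendsto_nhds_unique h0 tendsto_const_nhds
  rw [← hD0]
  refine integral_congr_ae (Filter.Eventually.of_forall fun z => ?_)
  simp only [hD, hA, hBf, Real.cos_zero, Real.sin_zero]
  ring_nf

lemma stein (hsph : ∀ᵐ z ∂ν, ∑ u, (z u)^2 = 1)
    (hinv : ∀ Q : Fin d → Fin d → ℝ,
      (∀ p q, (∑ u, Q p u * Q q u) = if p = q then (1:ℝ) else 0) →
      Measure.map (fun z p => ∑ q, Q p q * z q) ν = ν)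
    (c : ℝ) :
    ∫ z, (((d:ℝ) * Sf B z - B.card) - 2*c*(Sf B z * (1 - Sf B z))) * Real.exp (c * Sf B z) ∂ν
      = 0 := by
  set g : Fin d → Fin d → (Fin d → ℝ) → ℝ := fun t s z =>
    ((z t ^ 2 - z s ^ 2) - 2 * c * (z t ^ 2 * z s ^ 2)) * Real.exp (c * Sf B z) with hg
  have hgcont : ∀ t s, Continuous (g t s) := by
    intro t s
    exact ((((continuous_apply t).pow 2).sub ((continuous_apply s).pow 2)).sub
      (continuous_const.mul (((continuous_apply t).pow 2).mul ((continuous_apply s).pow 2)))).mul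
      (Real.continuous_exp.comp (continuous_const.mul (continuous_Sf B)))
  have hgbd : ∀ t s, ∀ᵐ z ∂ν, |g t s z| ≤ (1 + 2*|c|) * Real.exp |c| := by
    intro t s
    filter_upwards [hsph] with z hz
    have hsq : ∀ u, z u ^ 2 ≤ 1 := by
      intro u
      have := Finset.single_le_sum (f := fun u => (z u)^2)
        (fun v _ => sq_nonneg (z v)) (Finset.mem_univ u)
      rwa [hz] at this
    have hS0 : 0 ≤ Sf B z := Finset.sum_nonneg fun u _ => sq_nonneg (z u)
    have hS1 : Sf B z ≤ 1 := by
      have := Finset.sum_le_sum_of_subset_of_nonneg (Finset.subset_univ B)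
        (fun u _ _ => sq_nonneg (z u))
      rwa [hz] at this
    have hE : Real.exp (c * Sf B z) ≤ Real.exp |c| :=
      Real.exp_le_exp.mpr (by
        calc c * Sf B z ≤ |c| * Sf B z := mul_le_mul_of_nonneg_right (le_abs_self c) hS0
          _ ≤ |c| * 1 := mul_le_mul_of_nonneg_left hS1 (abs_nonneg c)
          _ = |c| := mul_one _)
    rw [hg]
    simp only
    rw [abs_mul, abs_of_pos (Real.exp_pos _)]
    have h1 : |z t ^ 2 - z s ^ 2 - 2 * c * (z t ^ 2 * z s ^ 2)| ≤ 1 + 2*|c| := by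
      have h2 : |z t ^2 - z s ^2| ≤ 1 := by
        rw [abs_le]
        constructor <;> nlinarith [sq_nonneg (z t), sq_nonneg (z s), hsq t, hsq s]
      have h3 : |2 * c * (z t ^2 * z s ^2)| ≤ 2 * |c| := by
        rw [abs_mul, abs_mul, abs_of_nonneg (by positivity : (0:ℝ) ≤ z t ^2 * z s ^2)]
        calc |2| * |c| * (z t ^2 * z s ^2) ≤ |2| * |c| * 1 := by
              apply mul_le_mul_of_nonneg_left _ (by positivity)
              nlinarith [sq_nonneg (z t), sq_nonneg (z s), hsq t, hsq s]
          _ = 2 * |c| := by simp [abs_of_nonneg]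
      calc |z t ^ 2 - z s ^ 2 - 2 * c * (z t ^ 2 * z s ^ 2)|
          ≤ |z t ^2 - z s ^2| + |2 * c * (z t ^2 * z s ^2)| := abs_sub _ _
        _ ≤ 1 + 2*|c| := add_le_add h2 h3
    exact mul_le_mul h1 hE (Real.exp_pos _).le (by positivity)
  have hgint : ∀ t s, Integrable (g t s) ν := fun t s =>
    integrable_bdd (hgcont t s).aestronglyMeasurable (hgbd t s)
  have hzero : ∀ t ∈ B, ∀ s ∈ Bᶜ, ∫ z, g t s z ∂ν = 0 := by
    intro t ht s hs
    exact pair_stein hsph hinv ht (Finset.mem_compl.mp hs) c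
  have htotal : ∫ z, (∑ t ∈ B, ∑ s ∈ Bᶜ, g t s z) ∂ν = 0 := by
    rw [integral_finset_sum _ (fun t _ => integrable_finset_sum _ (fun s _ => hgint t s))]
    refine Finset.sum_eq_zero fun t ht => ?_
    rw [integral_finset_sum _ (fun s _ => hgint t s)]
    exact Finset.sum_eq_zero fun s hs => hzero t ht s hs
  rw [← htotal]
  refine integral_congr_ae ?_
  filter_upwards [hsph] with z hz
  have hT : (∑ s ∈ Bᶜ, z s ^ 2) = 1 - Sf B z := by
    rw [eq_sub_iff_add_eq]
    rw [add_comm]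
    rw [show Sf B z = ∑ u ∈ B, (z u)^2 from rfl]
    rw [Finset.sum_add_sum_compl]
    exact hz
  have hcard : (Bᶜ.card : ℝ) = (d:ℝ) - (B.card:ℝ) := by
    rw [Finset.card_compl]
    rw [Nat.cast_sub (by simpa using Finset.card_le_univ B)]
    simp
  symm
  rw [hg]
  simp only
  simp only [← Finset.sum_mul]
  symm
  congr 1
  have expand : ∀ t : Fin d, ∑ s ∈ Bᶜ, ((z t ^ 2 - z s ^ 2) - 2 * c * (z t ^ 2 * z s ^ 2))
      = (Bᶜ.card : ℝ) * z t ^2 - (1 - Sf B z) - 2 * c * (z t ^2 * (1 - Sf B z)) := by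
    intro t
    rw [Finset.sum_sub_distrib, Finset.sum_sub_distrib, Finset.sum_const, nsmul_eq_mul,
      ← Finset.mul_sum, ← Finset.mul_sum, hT]
  rw [Finset.sum_congr rfl (fun t _ => expand t)]
  rw [Finset.sum_sub_distrib, Finset.sum_sub_distrib, Finset.sum_const, nsmul_eq_mul,
    ← Finset.mul_sum, ← Finset.mul_sum, ← Finset.sum_mul]
  rw [show (∑ t ∈ B, z t ^2) = Sf B z from rfl, hcard]
  ring

noncomputable def psi (ν : Measure (Fin d → ℝ)) (B : Finset (Fin d)) (c : ℝ) : ℝ :=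
  ∫ z, Real.exp (c * Sf B z) ∂ν

noncomputable def psiD (ν : Measure (Fin d → ℝ)) (B : Finset (Fin d)) (c : ℝ) : ℝ :=
  ∫ z, Sf B z * Real.exp (c * Sf B z) ∂ν

noncomputable def rho (ν : Measure (Fin d → ℝ)) (B : Finset (Fin d)) (c : ℝ) : ℝ :=
  ∫ z, (Sf B z * (1 - Sf B z)) * Real.exp (c * Sf B z) ∂ν

lemma ae_Sf_mem (hsph : ∀ᵐ z ∂ν, ∑ u, (z u)^2 = 1) :
    ∀ᵐ z ∂ν, 0 ≤ Sf B z ∧ Sf B z ≤ 1 := by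
  filter_upwards [hsph] with z hz
  refine ⟨Finset.sum_nonneg fun u _ => sq_nonneg (z u), ?_⟩
  have := Finset.sum_le_sum_of_subset_of_nonneg (Finset.subset_univ B)
    (fun u _ _ => sq_nonneg (z u))
  rwa [hz] at this

lemma integrable_exp_Sf (hsph : ∀ᵐ z ∂ν, ∑ u, (z u)^2 = 1) (c : ℝ) :
    Integrable (fun z => Real.exp (c * Sf B z)) ν := by
  refine integrable_bdd (C := Real.exp |c|) (Real.continuous_exp.comp
    (continuous_const.mul (continuous_Sf B))).aestronglyMeasurable ?_
  filter_upwards [ae_Sf_mem hsph] with z hz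
  rw [abs_of_pos (Real.exp_pos _)]
  apply Real.exp_le_exp.mpr
  calc c * Sf B z ≤ |c| * Sf B z := mul_le_mul_of_nonneg_right (le_abs_self c) hz.1
    _ ≤ |c| * 1 := mul_le_mul_of_nonneg_left hz.2 (abs_nonneg c)
    _ = |c| := mul_one _

lemma integrable_S_exp_Sf (hsph : ∀ᵐ z ∂ν, ∑ u, (z u)^2 = 1) (c : ℝ) :
    Integrable (fun z => Sf B z * Real.exp (c * Sf B z)) ν := by
  refine integrable_bdd (C := Real.exp |c|) ((continuous_Sf B).mul (Real.continuous_exp.comp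
    (continuous_const.mul (continuous_Sf B)))).aestronglyMeasurable ?_
  filter_upwards [ae_Sf_mem hsph] with z hz
  rw [abs_mul, abs_of_nonneg hz.1, abs_of_pos (Real.exp_pos _)]
  have h2 : Real.exp (c * Sf B z) ≤ Real.exp |c| := Real.exp_le_exp.mpr (by
    calc c * Sf B z ≤ |c| * Sf B z := mul_le_mul_of_nonneg_right (le_abs_self c) hz.1
      _ ≤ |c| * 1 := mul_le_mul_of_nonneg_left hz.2 (abs_nonneg c)
      _ = |c| := mul_one _)
  calc Sf B z * Real.exp (c * Sf B z) ≤ 1 * Real.exp |c| :=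
      mul_le_mul hz.2 h2 (Real.exp_pos _).le zero_le_one
    _ = Real.exp |c| := one_mul _

lemma integrable_ST_exp_Sf (hsph : ∀ᵐ z ∂ν, ∑ u, (z u)^2 = 1) (c : ℝ) :
    Integrable (fun z => (Sf B z * (1 - Sf B z)) * Real.exp (c * Sf B z)) ν := by
  refine integrable_bdd (C := Real.exp |c|)
    (((continuous_Sf B).mul (continuous_const.sub (continuous_Sf B))).mul
    (Real.continuous_exp.comp (continuous_const.mul (continuous_Sf B)))).aestronglyMeasurable ?_
  filter_upwards [ae_Sf_mem hsph] with z hz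
  rw [abs_mul]
  have h2 : Real.exp (c * Sf B z) ≤ Real.exp |c| := Real.exp_le_exp.mpr (by
    calc c * Sf B z ≤ |c| * Sf B z := mul_le_mul_of_nonneg_right (le_abs_self c) hz.1
      _ ≤ |c| * 1 := mul_le_mul_of_nonneg_left hz.2 (abs_nonneg c)
      _ = |c| := mul_one _)
  rw [abs_of_pos (Real.exp_pos _)]
  have h1 : |Sf B z * (1 - Sf B z)| ≤ 1 := by
    rw [abs_mul, abs_of_nonneg hz.1, abs_of_nonneg (by linarith [hz.2])]
    nlinarith [hz.1, hz.2]
  calc |Sf B z * (1 - Sf B z)| * Real.exp (c * Sf B z) ≤ 1 * Real.exp |c| :=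
      mul_le_mul h1 h2 (Real.exp_pos _).le zero_le_one
    _ = Real.exp |c| := one_mul _

lemma psi_pos (hsph : ∀ᵐ z ∂ν, ∑ u, (z u)^2 = 1) (c : ℝ) : 0 < psi ν B c := by
  have h1 : Real.exp (-|c|) ≤ psi ν B c := by
    rw [show Real.exp (-|c|) = ∫ _ : Fin d → ℝ, Real.exp (-|c|) ∂ν by simp]
    refine integral_mono_ae (integrable_const _) (integrable_exp_Sf hsph c) ?_
    filter_upwards [ae_Sf_mem hsph] with z hz
    apply Real.exp_le_exp.mpr
    rcases le_or_gt 0 c with h|h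
    · calc -|c| ≤ 0 := neg_nonpos_of_nonneg (abs_nonneg c)
        _ ≤ c * Sf B z := mul_nonneg h hz.1
    · calc -|c| = c := by rw [abs_of_neg h, neg_neg]
        _ = c * 1 := (mul_one c).symm
        _ ≤ c * Sf B z := by
            apply mul_le_mul_of_nonpos_left hz.2 h.le
  exact lt_of_lt_of_le (Real.exp_pos _) h1

lemma psi_zero : psi ν B 0 = 1 := by
  unfold psi
  simp

lemma psiD_nonneg (hsph : ∀ᵐ z ∂ν, ∑ u, (z u)^2 = 1) (c : ℝ) : 0 ≤ psiD ν B c := by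
  refine integral_nonneg_of_ae ?_
  filter_upwards [ae_Sf_mem hsph] with z hz
  exact mul_nonneg hz.1 (Real.exp_pos _).le

lemma rho_nonneg (hsph : ∀ᵐ z ∂ν, ∑ u, (z u)^2 = 1) (c : ℝ) : 0 ≤ rho ν B c := by
  refine integral_nonneg_of_ae ?_
  filter_upwards [ae_Sf_mem hsph] with z hz
  exact mul_nonneg (mul_nonneg hz.1 (by linarith [hz.2])) (Real.exp_pos _).le

lemma rho_le_psiD (hsph : ∀ᵐ z ∂ν, ∑ u, (z u)^2 = 1) (c : ℝ) : rho ν B c ≤ psiD ν B c := by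
  refine integral_mono_ae (integrable_ST_exp_Sf hsph c) (integrable_S_exp_Sf hsph c) ?_
  filter_upwards [ae_Sf_mem hsph] with z hz
  have : Sf B z * (1 - Sf B z) ≤ Sf B z := by nlinarith [hz.1, hz.2]
  exact mul_le_mul_of_nonneg_right this (Real.exp_pos _).le

lemma hasDerivAt_psi (hsph : ∀ᵐ z ∂ν, ∑ u, (z u)^2 = 1) (c : ℝ) :
    HasDerivAt (psi ν B) (psiD ν B c) c := by
  have key := hasDerivAt_integral_of_dominated_loc_of_deriv_le
    (F := fun (x : ℝ) (z : Fin d → ℝ) => Real.exp (x * Sf B z))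
    (F' := fun (x : ℝ) (z : Fin d → ℝ) => Sf B z * Real.exp (x * Sf B z))
    (x₀ := c) (bound := fun _ => Real.exp (|c| + 1)) (s := Metric.ball c 1) (Metric.ball_mem_nhds c one_pos)
    (Filter.Eventually.of_forall fun x => (Real.continuous_exp.comp
      (continuous_const.mul (continuous_Sf B))).aestronglyMeasurable)
    (integrable_exp_Sf hsph c)
    ((continuous_Sf B).mul (Real.continuous_exp.comp
      (continuous_const.mul (continuous_Sf B)))).aestronglyMeasurable
    ?_ (integrable_const _) ?_
  · exact key.2
  · filter_upwards [ae_Sf_mem hsph] with z hz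
    intro x hx
    rw [Real.norm_eq_abs, abs_mul, abs_of_nonneg hz.1, abs_of_pos (Real.exp_pos _)]
    have hxc : |x| ≤ |c| + 1 := by
      have := mem_ball_iff_norm.mp hx
      rw [Real.norm_eq_abs] at this
      calc |x| = |c + (x - c)| := by ring_nf
        _ ≤ |c| + |x - c| := abs_add_le _ _
        _ ≤ |c| + 1 := by linarith [this.le]
    have h2 : Real.exp (x * Sf B z) ≤ Real.exp (|c| + 1) := Real.exp_le_exp.mpr (by
      calc x * Sf B z ≤ |x| * Sf B z := mul_le_mul_of_nonneg_right (le_abs_self x) hz.1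
        _ ≤ |x| * 1 := mul_le_mul_of_nonneg_left hz.2 (abs_nonneg x)
        _ = |x| := mul_one _
        _ ≤ |c| + 1 := hxc)
    calc Sf B z * Real.exp (x * Sf B z) ≤ 1 * Real.exp (|c| + 1) :=
        mul_le_mul hz.2 h2 (Real.exp_pos _).le zero_le_one
      _ = Real.exp (|c| + 1) := one_mul _
  · refine Filter.Eventually.of_forall fun z => ?_
    intro x _
    have h1 : HasDerivAt (fun x : ℝ => x * Sf B z) (Sf B z) x := by
      simpa using (hasDerivAt_id x).mul_const (Sf B z)
    have := h1.exp
    refine this.congr_deriv ?_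
    ring

lemma stein_psi (hsph : ∀ᵐ z ∂ν, ∑ u, (z u)^2 = 1)
    (hinv : ∀ Q : Fin d → Fin d → ℝ,
      (∀ p q, (∑ u, Q p u * Q q u) = if p = q then (1:ℝ) else 0) →
      Measure.map (fun z p => ∑ q, Q p q * z q) ν = ν)
    (c : ℝ) :
    (d:ℝ) * psiD ν B c - (B.card:ℝ) * psi ν B c = 2 * c * rho ν B c := by
  have h := stein (B := B) hsph hinv c
  have hsplit : ∀ z : Fin d → ℝ,
      (((d:ℝ) * Sf B z - B.card) - 2*c*(Sf B z * (1 - Sf B z))) * Real.exp (c * Sf B z)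
        = (d:ℝ) * (Sf B z * Real.exp (c * Sf B z)) - (B.card:ℝ) * Real.exp (c * Sf B z)
          - 2*c*((Sf B z * (1 - Sf B z)) * Real.exp (c * Sf B z)) := by
    intro z; ring
  rw [integral_congr_ae (Filter.Eventually.of_forall hsplit)] at h
  have I1 : Integrable (fun z => (d:ℝ) * (Sf B z * Real.exp (c * Sf B z))) ν :=
    (integrable_S_exp_Sf hsph c).const_mul _
  have I2 : Integrable (fun z => (B.card:ℝ) * Real.exp (c * Sf B z)) ν :=
    (integrable_exp_Sf hsph c).const_mul _
  have I3 : Integrable (fun z => 2*c*((Sf B z * (1 - Sf B z)) * Real.exp (c * Sf B z))) ν :=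
    (integrable_ST_exp_Sf hsph c).const_mul _
  have h2 : (d:ℝ) * psiD ν B c - (B.card:ℝ) * psi ν B c - 2*c*rho ν B c = 0 := by
    rw [← h]
    unfold psi psiD rho
    have I12 : Integrable (fun z => (d:ℝ) * (Sf B z * Real.exp (c * Sf B z))
        - (B.card:ℝ) * Real.exp (c * Sf B z)) ν := I1.sub I2
    rw [← integral_const_mul, ← integral_const_mul, ← integral_const_mul,
      ← integral_sub I1 I2, ← integral_sub I12 I3]
  linarith [h2]

lemma mgf_bound (hsph : ∀ᵐ z ∂ν, ∑ u, (z u)^2 = 1)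
    (hinv : ∀ Q : Fin d → Fin d → ℝ,
      (∀ p q, (∑ u, Q p u * Q q u) = if p = q then (1:ℝ) else 0) →
      Measure.map (fun z p => ∑ q, Q p q * z q) ν = ν)
    (hd : 0 < d) (hm : 1 ≤ B.card) (c : ℝ) (hc : 2*c < d) :
    psi ν B c ^ 2 * (1 - 2*c/d) ^ B.card ≤ 1 := by
  have hd0 : (0:ℝ) < d := by exact_mod_cast hd
  set m := B.card with hmm
  set Φ : ℝ → ℝ := fun x => psi ν B x ^ 2 * (1 - 2*x/d) ^ m with hΦ
  have hΦderiv : ∀ x : ℝ, HasDerivAt Φ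
      (2 * psi ν B x * psiD ν B x * (1 - 2*x/d) ^ m
        + psi ν B x ^ 2 * ((m:ℝ) * (1 - 2*x/d) ^ (m-1) * (-(2/d)))) x := by
    intro x
    have h1 : HasDerivAt (fun x => psi ν B x ^ 2) (2 * psi ν B x * psiD ν B x) x := by
      have := (hasDerivAt_psi (B := B) hsph x).pow 2
      refine this.congr_deriv ?_
      ring
    have hlin : HasDerivAt (fun x : ℝ => 1 - 2*x/d) (-(2/d)) x := by
      have h0 : HasDerivAt (fun x : ℝ => (2/d) * x) (2/d) x := by
        simpa using (hasDerivAt_id x).const_mul (2/(d:ℝ))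
      have := h0.const_sub 1
      refine HasDerivAt.congr_of_eventuallyEq this (Filter.Eventually.of_forall fun y => ?_)
      · ring
    have h2 : HasDerivAt (fun x : ℝ => (1 - 2*x/d) ^ m)
        ((m:ℝ) * (1 - 2*x/d) ^ (m-1) * (-(2/d))) x := hlin.pow m
    exact h1.mul h2
  have hΦcont : Continuous Φ := by
    have : Differentiable ℝ Φ := fun x => (hΦderiv x).differentiableAt
    exact this.continuous
  have hsign : ∀ x : ℝ, 2*x < d → deriv Φ x
      = (2/d) * (1 - 2*x/d) ^ (m-1) * psi ν B x *
        (((d:ℝ) - 2*x) * psiD ν B x - (m:ℝ) * psi ν B x) := by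
    intro x hx
    rw [(hΦderiv x).deriv]
    have hbase : (1 - 2*x/d) ^ m = (1 - 2*x/d) ^ (m-1) * (1 - 2*x/d) := by
      conv_lhs => rw [show m = (m-1) + 1 from (Nat.succ_pred_eq_of_pos hm).symm]
      rw [pow_succ]
    rw [hbase]
    field_simp
    ring
  have hfactor : ∀ x : ℝ, ((d:ℝ) - 2*x) * psiD ν B x - (m:ℝ) * psi ν B x
      = 2 * x * (rho ν B x - psiD ν B x) := by
    intro x
    have := stein_psi (B := B) hsph hinv x
    rw [hmm]
    linarith [this]
  rcases le_or_gt c 0 with hc0 | hc0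
  · -- monotone on [c, 0]
    have hmono : MonotoneOn Φ (Set.Icc c 0) := by
      apply monotoneOn_of_deriv_nonneg (convex_Icc c 0) hΦcont.continuousOn
      · intro x _
        exact (hΦderiv x).differentiableAt.differentiableWithinAt
      · intro x hx
        rw [interior_Icc] at hx
        have hx0 : x < 0 := hx.2
        have hxd : 2*x < d := by nlinarith
        rw [hsign x hxd, hfactor x]
        have hb : (0:ℝ) < 1 - 2*x/d := by
          rw [sub_pos, div_lt_one hd0]; linarith
        have hrp := rho_le_psiD (B := B) hsph x
        have h1 : 0 ≤ 2 * x * (rho ν B x - psiD ν B x) := by nlinarith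
        have hψ := (psi_pos (B := B) hsph x).le
        exact mul_nonneg (mul_nonneg (mul_nonneg (by positivity) (pow_nonneg hb.le _)) hψ) h1
    have := hmono (Set.mem_Icc.mpr ⟨le_refl c, hc0⟩) (Set.mem_Icc.mpr ⟨hc0, le_refl 0⟩) hc0
    calc Φ c ≤ Φ 0 := this
      _ = 1 := by rw [hΦ]; simp [psi_zero]
  · -- antitone on [0, c]
    have hanti : AntitoneOn Φ (Set.Icc 0 c) := by
      apply antitoneOn_of_deriv_nonpos (convex_Icc 0 c) hΦcont.continuousOn
      · intro x _
        exact (hΦderiv x).differentiableAt.differentiableWithinAt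
      · intro x hx
        rw [interior_Icc] at hx
        have hx0 : 0 < x := hx.1
        have hxd : 2*x < d := by nlinarith [hx.2]
        rw [hsign x hxd, hfactor x]
        have hb : (0:ℝ) < 1 - 2*x/d := by
          rw [sub_pos, div_lt_one hd0]; linarith
        have hrp := rho_le_psiD (B := B) hsph x
        have h1 : 2 * x * (rho ν B x - psiD ν B x) ≤ 0 := by nlinarith
        have hψ := (psi_pos (B := B) hsph x).le
        have h2 : 0 ≤ (2/(d:ℝ)) * (1 - 2*x/d) ^ (m-1) * psi ν B x :=
          mul_nonneg (mul_nonneg (by positivity) (pow_nonneg hb.le _)) hψ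
        exact mul_nonpos_of_nonneg_of_nonpos h2 h1
    have := hanti (Set.mem_Icc.mpr ⟨le_refl 0, hc0.le⟩) (Set.mem_Icc.mpr ⟨hc0.le, le_refl c⟩) hc0.le
    calc Φ c ≤ Φ 0 := this
      _ = 1 := by rw [hΦ]; simp [psi_zero]

lemma chernoff_upper (hsph : ∀ᵐ z ∂ν, ∑ u, (z u)^2 = 1) {c : ℝ} (hc : 0 ≤ c) (b : ℝ) :
    (ν {z | b ≤ Sf B z}).toReal ≤ Real.exp (-(c*b)) * psi ν B c := by
  have hEm : MeasurableSet {z : Fin d → ℝ | b ≤ Sf B z} :=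
    measurableSet_le measurable_const (measurable_Sf B)
  have h1 : (ν {z | b ≤ Sf B z}).toReal
      = ∫ z, Set.indicator {z : Fin d → ℝ | b ≤ Sf B z} (fun _ => (1:ℝ)) z ∂ν := by
    rw [integral_indicator_const _ hEm]
    simp
    rfl
  rw [h1]
  have h2 : ∀ z : Fin d → ℝ, Set.indicator {z : Fin d → ℝ | b ≤ Sf B z} (fun _ => (1:ℝ)) z
      ≤ Real.exp (-(c*b)) * Real.exp (c * Sf B z) := by
    intro z
    rw [← Real.exp_add]
    rcases em (z ∈ {z : Fin d → ℝ | b ≤ Sf B z}) with hz | hz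
    · rw [Set.indicator_of_mem hz]
      apply Real.one_le_exp
      have : b ≤ Sf B z := hz
      nlinarith
    · rw [Set.indicator_of_notMem hz]
      exact (Real.exp_pos _).le
  calc ∫ z, Set.indicator {z : Fin d → ℝ | b ≤ Sf B z} (fun _ => (1:ℝ)) z ∂ν
      ≤ ∫ z, Real.exp (-(c*b)) * Real.exp (c * Sf B z) ∂ν := by
        refine integral_mono ((integrable_const (1:ℝ)).indicator hEm)
          ((integrable_exp_Sf hsph c).const_mul _) h2
    _ = Real.exp (-(c*b)) * psi ν B c := integral_const_mul _ _

lemma chernoff_lower (hsph : ∀ᵐ z ∂ν, ∑ u, (z u)^2 = 1) {c : ℝ} (hc : c ≤ 0) (a : ℝ) :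
    (ν {z | Sf B z ≤ a}).toReal ≤ Real.exp (-(c*a)) * psi ν B c := by
  have hEm : MeasurableSet {z : Fin d → ℝ | Sf B z ≤ a} :=
    measurableSet_le (measurable_Sf B) measurable_const
  have h1 : (ν {z | Sf B z ≤ a}).toReal
      = ∫ z, Set.indicator {z : Fin d → ℝ | Sf B z ≤ a} (fun _ => (1:ℝ)) z ∂ν := by
    rw [integral_indicator_const _ hEm]
    simp
    rfl
  rw [h1]
  have h2 : ∀ z : Fin d → ℝ, Set.indicator {z : Fin d → ℝ | Sf B z ≤ a} (fun _ => (1:ℝ)) z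
      ≤ Real.exp (-(c*a)) * Real.exp (c * Sf B z) := by
    intro z
    rw [← Real.exp_add]
    rcases em (z ∈ {z : Fin d → ℝ | Sf B z ≤ a}) with hz | hz
    · rw [Set.indicator_of_mem hz]
      apply Real.one_le_exp
      have : Sf B z ≤ a := hz
      nlinarith
    · rw [Set.indicator_of_notMem hz]
      exact (Real.exp_pos _).le
  calc ∫ z, Set.indicator {z : Fin d → ℝ | Sf B z ≤ a} (fun _ => (1:ℝ)) z ∂ν
      ≤ ∫ z, Real.exp (-(c*a)) * Real.exp (c * Sf B z) ∂ν := by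
        refine integral_mono ((integrable_const (1:ℝ)).indicator hEm)
          ((integrable_exp_Sf hsph c).const_mul _) h2
    _ = Real.exp (-(c*a)) * psi ν B c := integral_const_mul _ _

lemma sq_le_exp_to_le {X y : ℝ} (hX : 0 ≤ X) (hsq : X^2 ≤ Real.exp y)
    : X ≤ Real.exp (y / 2) := by
  have h1 : Real.exp (y/2) ^ 2 = Real.exp y := by
    rw [sq, ← Real.exp_add]; ring_nf
  rw [← h1] at hsq
  have := Real.sqrt_le_sqrt hsq
  rwa [Real.sqrt_sq hX, Real.sqrt_sq (Real.exp_pos _).le] at this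

lemma tail_upper (hsph : ∀ᵐ z ∂ν, ∑ u, (z u)^2 = 1)
    (hinv : ∀ Q : Fin d → Fin d → ℝ,
      (∀ p q, (∑ u, Q p u * Q q u) = if p = q then (1:ℝ) else 0) →
      Measure.map (fun z p => ∑ q, Q p q * z q) ν = ν)
    (hd : 0 < d) (hm : 1 ≤ B.card) {ε : ℝ} (hε0 : 0 < ε) (hε1 : ε ≤ 1) :
    (ν {z | (1+ε)^2 * ((B.card:ℝ)/(d:ℝ)) ≤ Sf B z}).toReal
      ≤ Real.exp (-((B.card:ℝ) * ε^2) / 2) := by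
  have hd0 : (0:ℝ) < d := by exact_mod_cast hd
  set mR : ℝ := (B.card : ℝ) with hmR
  have hmR0 : 0 < mR := by
    rw [hmR]; exact_mod_cast hm
  set γ : ℝ := (1+ε)^2 with hγ
  have hγ1 : 1 < γ := by nlinarith
  have hγ0 : 0 < γ := by positivity
  set c : ℝ := (d:ℝ)/2 * (1 - 1/γ) with hc
  have hc0 : 0 ≤ c := by
    have : 1/γ ≤ 1 := by rw [div_le_one hγ0]; linarith
    rw [hc]; nlinarith
  have h2c : 2*c < d := by
    have : 0 < 1/γ := by positivity
    rw [hc]; nlinarith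
  have hbase : 1 - 2*c/(d:ℝ) = 1/γ := by
    rw [hc]; field_simp; ring
  set b : ℝ := γ * (mR/(d:ℝ)) with hb
  set X : ℝ := (ν {z | b ≤ Sf B z}).toReal with hX
  have hX0 : 0 ≤ X := ENNReal.toReal_nonneg
  have hch := chernoff_upper (B := B) hsph hc0 b
  have hmgf := mgf_bound (B := B) hsph hinv hd hm c h2c
  rw [hbase] at hmgf
  have hψ0 := psi_pos (B := B) hsph c
  have hψsq : psi ν B c ^ 2 ≤ γ ^ B.card := by
    have hgg : (1/γ:ℝ)^B.card * γ^B.card = 1 := by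
      rw [← mul_pow, one_div_mul_cancel hγ0.ne', one_pow]
    calc psi ν B c ^2 = psi ν B c ^2 * ((1/γ)^B.card * γ^B.card) := by rw [hgg, mul_one]
      _ = (psi ν B c ^2 * (1/γ)^B.card) * γ^B.card := by ring
      _ ≤ 1 * γ ^ B.card := mul_le_mul_of_nonneg_right hmgf (by positivity)
      _ = γ ^ B.card := one_mul _
  have hXsq : X^2 ≤ Real.exp (-(mR * ε^2)) := by
    have e1 : X^2 ≤ (Real.exp (-(c*b)) * psi ν B c)^2 := pow_le_pow_left₀ hX0 hch 2
    have e3 : Real.exp (-(c*b))^2 = Real.exp (-(2*(c*b))) := by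
      rw [sq, ← Real.exp_add]; ring_nf
    have e4 : γ ^ B.card = Real.exp (mR * Real.log γ) := by
      have h := Real.exp_log (show (0:ℝ) < γ^B.card by positivity)
      rw [Real.log_pow] at h
      rw [hmR]
      exact h.symm
    have e5 : X^2 ≤ Real.exp (-(2*(c*b))) * Real.exp (mR * Real.log γ) := by
      calc X^2 ≤ (Real.exp (-(c*b)) * psi ν B c)^2 := e1
        _ = (Real.exp (-(c*b)))^2 * psi ν B c ^2 := by ring
        _ ≤ (Real.exp (-(c*b)))^2 * γ^B.card :=
            mul_le_mul_of_nonneg_left hψsq (by positivity)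
        _ = Real.exp (-(2*(c*b))) * Real.exp (mR * Real.log γ) := by rw [e3, e4]
    rw [← Real.exp_add] at e5
    refine le_trans e5 (Real.exp_le_exp.mpr ?_)
    have h2cb : 2*(c*b) = mR * (γ - 1) := by
      rw [hc, hb]; field_simp
    have hlog : Real.log γ ≤ 2*ε := by
      rw [hγ, Real.log_pow]
      have hl : Real.log (1+ε) ≤ ε := by
        have := Real.log_le_sub_one_of_pos (show (0:ℝ) < 1+ε by linarith)
        linarith
      push_cast
      linarith
    have hγε : γ - 1 = 2*ε + ε^2 := by rw [hγ]; ring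
    rw [h2cb]
    nlinarith
  have := sq_le_exp_to_le hX0 hXsq
  exact this

lemma tail_lower (hsph : ∀ᵐ z ∂ν, ∑ u, (z u)^2 = 1)
    (hinv : ∀ Q : Fin d → Fin d → ℝ,
      (∀ p q, (∑ u, Q p u * Q q u) = if p = q then (1:ℝ) else 0) →
      Measure.map (fun z p => ∑ q, Q p q * z q) ν = ν)
    (hd : 0 < d) (hm : 1 ≤ B.card) {ε : ℝ} (hε0 : 0 < ε) (hε1 : ε < 1) :
    (ν {z | Sf B z ≤ (1-ε)^2 * ((B.card:ℝ)/(d:ℝ))}).toReal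
      ≤ Real.exp (-((B.card:ℝ) * ε^2) / 2) := by
  have hd0 : (0:ℝ) < d := by exact_mod_cast hd
  set mR : ℝ := (B.card : ℝ) with hmR
  have hmR0 : 0 < mR := by
    rw [hmR]; exact_mod_cast hm
  set β : ℝ := (1-ε)^2 with hβ
  have hβ1 : β < 1 := by nlinarith
  have hβ0 : 0 < β := by
    rw [hβ]; exact pow_pos (by linarith) 2
  set c : ℝ := (d:ℝ)/2 * (1 - 1/β) with hc
  have hc0 : c ≤ 0 := by
    have : 1 ≤ 1/β := by rw [le_div_iff₀ hβ0]; linarith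
    rw [hc]; nlinarith
  have h2c : 2*c < d := by nlinarith
  have hbase : 1 - 2*c/(d:ℝ) = 1/β := by
    rw [hc]; field_simp; ring
  set a : ℝ := β * (mR/(d:ℝ)) with ha
  set X : ℝ := (ν {z | Sf B z ≤ a}).toReal with hX
  have hX0 : 0 ≤ X := ENNReal.toReal_nonneg
  have hch := chernoff_lower (B := B) hsph hc0 a
  have hmgf := mgf_bound (B := B) hsph hinv hd hm c h2c
  rw [hbase] at hmgf
  have hψ0 := psi_pos (B := B) hsph c
  have hψsq : psi ν B c ^ 2 ≤ β ^ B.card := by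
    have hgg : (1/β:ℝ)^B.card * β^B.card = 1 := by
      rw [← mul_pow, one_div_mul_cancel hβ0.ne', one_pow]
    calc psi ν B c ^2 = psi ν B c ^2 * ((1/β)^B.card * β^B.card) := by rw [hgg, mul_one]
      _ = (psi ν B c ^2 * (1/β)^B.card) * β^B.card := by ring
      _ ≤ 1 * β ^ B.card := mul_le_mul_of_nonneg_right hmgf (by positivity)
      _ = β ^ B.card := one_mul _
  have hXsq : X^2 ≤ Real.exp (-(mR * ε^2)) := by
    have e1 : X^2 ≤ (Real.exp (-(c*a)) * psi ν B c)^2 := pow_le_pow_left₀ hX0 hch 2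
    have e3 : Real.exp (-(c*a))^2 = Real.exp (-(2*(c*a))) := by
      rw [sq, ← Real.exp_add]; ring_nf
    have e4 : β ^ B.card = Real.exp (mR * Real.log β) := by
      have h := Real.exp_log (show (0:ℝ) < β^B.card by positivity)
      rw [Real.log_pow] at h
      rw [hmR]
      exact h.symm
    have e5 : X^2 ≤ Real.exp (-(2*(c*a))) * Real.exp (mR * Real.log β) := by
      calc X^2 ≤ (Real.exp (-(c*a)) * psi ν B c)^2 := e1
        _ = (Real.exp (-(c*a)))^2 * psi ν B c ^2 := by ring
        _ ≤ (Real.exp (-(c*a)))^2 * β^B.card :=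
            mul_le_mul_of_nonneg_left hψsq (by positivity)
        _ = Real.exp (-(2*(c*a))) * Real.exp (mR * Real.log β) := by rw [e3, e4]
    rw [← Real.exp_add] at e5
    refine le_trans e5 (Real.exp_le_exp.mpr ?_)
    have h2ca : 2*(c*a) = mR * (β - 1) := by
      rw [hc, ha]; field_simp
    have hlog : Real.log β ≤ -(2*ε) := by
      rw [hβ, Real.log_pow]
      have hl : Real.log (1-ε) ≤ -ε := by
        have := Real.log_le_sub_one_of_pos (show (0:ℝ) < 1-ε by linarith)
        linarith
      push_cast
      linarith
    rw [h2ca]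
    have hβε : β - 1 = -(2*ε) + ε^2 := by rw [hβ]; ring
    nlinarith
  exact sq_le_exp_to_le hX0 hXsq

lemma block_index_eq {d' i j a b : ℕ} (ha : a < d') (hb : b < d')
    (h : i * d' + a = j * d' + b) : i = j ∧ a = b := by
  have hd' : 0 < d' := lt_of_le_of_lt (Nat.zero_le a) ha
  have e1 : (i * d' + a) / d' = i := by
    rw [mul_comm, Nat.mul_add_div hd', Nat.div_eq_of_lt ha, add_zero]
  have e2 : (j * d' + b) / d' = j := by
    rw [mul_comm, Nat.mul_add_div hd', Nat.div_eq_of_lt hb, add_zero]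
  have hij : i = j := by rw [← e1, h, e2]
  subst hij
  exact ⟨rfl, by omega⟩

lemma col_orth {d : ℕ} {R : Fin d → Fin d → ℝ}
    (hR : ∀ i j, (∑ t, R i t * R j t) = if i = j then (1:ℝ) else 0) :
    ∀ j k, (∑ t, R t j * R t k) = if j = k then (1:ℝ) else 0 := by
  intro j k
  set M : Matrix (Fin d) (Fin d) ℝ := Matrix.of R with hM
  have hMMT : M * Matrix.transpose M = 1 := by
    ext a b
    rw [Matrix.mul_apply]
    simp only [Matrix.transpose_apply, hM, Matrix.of_apply, Matrix.one_apply]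
    exact hR a b
  have hMTM : Matrix.transpose M * M = 1 := mul_eq_one_comm.mp hMMT
  have hjk := congrFun (congrFun hMTM j) k
  rw [Matrix.mul_apply] at hjk
  simpa [Matrix.transpose_apply, hM, Matrix.one_apply] using hjk

lemma y_sphere {d : ℕ} {R : Fin d → Fin d → ℝ}
    (hR : ∀ i j, (∑ t, R i t * R j t) = if i = j then (1:ℝ) else 0)
    (x : Fin d → ℝ) (hx : ∑ j, (x j)^2 = 1) :
    ∑ u, (∑ j, R u j * x j)^2 = 1 := by
  have hcol := col_orth hR
  calc ∑ u, (∑ j, R u j * x j)^2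
      = ∑ u, ∑ j, ∑ k, (R u j * x j) * (R u k * x k) := by
        refine Finset.sum_congr rfl fun u _ => ?_
        rw [sq, Finset.sum_mul_sum]
    _ = ∑ j, ∑ k, ∑ u, (R u j * x j) * (R u k * x k) := by
        rw [Finset.sum_comm]
        exact Finset.sum_congr rfl fun j _ => Finset.sum_comm
    _ = ∑ j, ∑ k, (x j * x k) * ∑ u, R u j * R u k := by
        refine Finset.sum_congr rfl fun j _ => Finset.sum_congr rfl fun k _ => ?_
        rw [Finset.mul_sum]
        exact Finset.sum_congr rfl fun u _ => by ring
    _ = ∑ j, (x j)^2 := by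
        refine Finset.sum_congr rfl fun j _ => ?_
        have hterm : ∀ k : Fin d, (x j * x k) * (∑ u, R u j * R u k)
            = if k = j then x j * x k else 0 := by
          intro k
          rw [hcol j k]
          rcases eq_or_ne j k with h|h
          · simp [h]
          · simp [h, Ne.symm h]
        rw [Finset.sum_congr rfl fun k _ => hterm k]
        rw [Finset.sum_ite_eq' Finset.univ j (fun k => x j * x k)]
        simp [sq]
    _ = 1 := hx

end HBDG

open HBDG

/-- There is a universal constant `K` such that for all `ε, δ ∈ (0,1/2)` and `d' ∣ d` with
`d' ≥ K·ε⁻²·log(1/δ)`: if `R` is a random `d×d` matrix distributed according to the Haar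
probability measure on the orthogonal group `O(d)` (formalized as: `μ` is a probability
measure giving full mass to orthogonal matrices — those with orthonormal rows — and invariant
under left multiplication by any orthogonal matrix), and `P_i` consists of rows
`(i−1)d'+1, …, i·d'` of `R`, then `{P_i}` is almost surely an orthogonal decomposition of
`ℝ^d` into `ℝ^{d'}`, and for every unit vector `x` and every `i`,
`ℙ(|√(d/d')·‖P_i x‖₂ − 1| > ε) < δ`. -/
theorem haar_block_decomposition_guarantee :
    ∃ K : ℝ, 0 < K ∧ ∀ ε δ : ℝ, 0 < ε → ε < 1 / 2 → 0 < δ → δ < 1 / 2 →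
    ∀ d d' : ℕ, ∀ hdvd : d' ∣ d,
      K * (ε ^ 2)⁻¹ * Real.log (1 / δ) ≤ (d' : ℝ) →
    ∀ μ : Measure (Fin d → Fin d → ℝ), IsProbabilityMeasure μ →
      μ {R | ∀ i j, (∑ t, R i t * R j t) = if i = j then (1 : ℝ) else 0} = 1 →
      (∀ Q : Fin d → Fin d → ℝ,
        (∀ i j, (∑ t, Q i t * Q j t) = if i = j then (1 : ℝ) else 0) →
        Measure.map (fun R => fun i j => ∑ t, Q i t * R t j) μ = μ) →
      (∀ᵐ R ∂μ, IsOrthDecomp d d' (rowBlock d d' hdvd R)) ∧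
      ∀ x : Fin d → ℝ, Real.sqrt (∑ j, (x j) ^ 2) = 1 → ∀ i : Fin (d / d'),
        (μ {R | |Real.sqrt ((d : ℝ) / (d' : ℝ)) *
            Real.sqrt (∑ a, (∑ j, rowBlock d d' hdvd R i a j * x j) ^ 2) - 1|
              > ε}).toReal < δ := by
  refine ⟨100, by norm_num, ?_⟩
  intro ε δ hε0 hε2 hδ0 hδ2 d d' hdvd hKd μ hμprob hμorth hμinv
  have hεsq : (0:ℝ) < ε^2 := by positivity
  have hlog : 0 < Real.log (1/δ) := Real.log_pos (by rw [lt_div_iff₀ hδ0, one_mul]; linarith)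
  have hd'pos : 0 < d' := by
    rcases Nat.eq_zero_or_pos d' with h0 | h
    · exfalso
      have hpos : (0:ℝ) < 100 * (ε^2)⁻¹ * Real.log (1/δ) := by positivity
      rw [h0] at hKd
      push_cast at hKd
      linarith
    · exact h
  -- orthogonality set
  have hOSm : MeasurableSet {R : Fin d → Fin d → ℝ |
      ∀ i j, (∑ t, R i t * R j t) = if i = j then (1 : ℝ) else 0} := by
    have heq : {R : Fin d → Fin d → ℝ |
        ∀ i j, (∑ t, R i t * R j t) = if i = j then (1 : ℝ) else 0}
        = ⋂ (i : Fin d), ⋂ (j : Fin d),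
          {R : Fin d → Fin d → ℝ | (∑ t, R i t * R j t) = if i = j then (1 : ℝ) else 0} := by
      ext R
      simp [Set.mem_iInter]
    rw [heq]
    refine MeasurableSet.iInter fun i => MeasurableSet.iInter fun j => ?_
    refine measurableSet_eq_fun ?_ measurable_const
    exact Finset.measurable_sum _ fun t _ => by fun_prop
  have hae : ∀ᵐ R ∂μ, ∀ i j, (∑ t, R i t * R j t) = if i = j then (1 : ℝ) else 0 := by
    have hcompl : μ {R : Fin d → Fin d → ℝ |
        ∀ i j, (∑ t, R i t * R j t) = if i = j then (1 : ℝ) else 0}ᶜ = 0 := by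
      rw [measure_compl hOSm (measure_ne_top μ _), measure_univ, hμorth, tsub_self]
    rw [ae_iff]
    exact hcompl
  constructor
  · -- Part 1: a.s. orthogonal decomposition
    filter_upwards [hae] with R hR
    intro i a j b
    simp only [rowBlock]
    rw [hR]
    by_cases h : i = j ∧ a = b
    · obtain ⟨h1, h2⟩ := h
      subst h1; subst h2
      simp
    · rw [if_neg ?_, if_neg h]
      intro heq
      have hval : i.1 * d' + a.1 = j.1 * d' + b.1 := congrArg Fin.val heq
      obtain ⟨h1, h2⟩ := block_index_eq a.isLt b.isLt hval
      exact h ⟨Fin.ext h1, Fin.ext h2⟩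
  · -- Part 2: concentration
    intro x hx i
    have hddpos : 0 < d / d' := lt_of_le_of_lt (Nat.zero_le _) i.isLt
    have hdpos : 0 < d := by
      rcases Nat.eq_zero_or_pos d with h|h
      · rw [h] at hddpos; simp at hddpos
      · exact h
    have hd'led : d' ≤ d := Nat.le_of_dvd hdpos hdvd
    have hdR : (0:ℝ) < d := by exact_mod_cast hdpos
    have hd'R : (0:ℝ) < d' := by exact_mod_cast hd'pos
    have hxsum : ∑ j, (x j)^2 = 1 := by
      have h0 : (0:ℝ) ≤ ∑ j, (x j)^2 := Finset.sum_nonneg fun j _ => sq_nonneg _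
      have := Real.sq_sqrt h0
      rw [hx] at this
      simpa using this.symm
    -- the random unit vector y and its law ν
    set y : (Fin d → Fin d → ℝ) → (Fin d → ℝ) := fun R t => ∑ j, R t j * x j with hy
    have hymeas : Measurable y :=
      measurable_pi_lambda _ fun t => Finset.measurable_sum _ fun j _ =>
        ((measurable_pi_apply j).comp (measurable_pi_apply t)).mul_const _
    set ν : Measure (Fin d → ℝ) := Measure.map y μ with hν
    haveI hνprob : IsProbabilityMeasure ν := Measure.isProbabilityMeasure_map hymeas.aemeasurable
    have hsphm : MeasurableSet {z : Fin d → ℝ | ∑ u, (z u)^2 = 1} :=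
      measurableSet_eq_fun (Finset.measurable_sum _ fun u _ => (measurable_pi_apply u).pow_const 2)
        measurable_const
    have hsph : ∀ᵐ z ∂ν, ∑ u, (z u)^2 = 1 := by
      rw [hν, ae_map_iff hymeas.aemeasurable hsphm]
      filter_upwards [hae] with R hR
      exact y_sphere hR x hxsum
    have hinv : ∀ Q : Fin d → Fin d → ℝ,
        (∀ p q, (∑ u, Q p u * Q q u) = if p = q then (1:ℝ) else 0) →
        Measure.map (fun z p => ∑ q, Q p q * z q) ν = ν := by
      intro Q hQ
      have hLmeas : Measurable (fun z : Fin d → ℝ => fun p : Fin d => ∑ q, Q p q * z q) :=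
        measurable_pi_lambda _ fun p => Finset.measurable_sum _ fun q _ =>
          (measurable_pi_apply q).const_mul _
      have hQmeas : Measurable (fun R : Fin d → Fin d → ℝ => fun i j => ∑ t, Q i t * R t j) := by
        fun_prop
      have hcomp : (fun z : Fin d → ℝ => fun p : Fin d => ∑ q, Q p q * z q) ∘ y
          = y ∘ (fun R => fun i j => ∑ t, Q i t * R t j) := by
        funext R
        funext p
        simp only [Function.comp_apply, hy]
        calc ∑ q, Q p q * (∑ j, R q j * x j)
            = ∑ q, ∑ j, Q p q * (R q j * x j) := by
              exact Finset.sum_congr rfl fun q _ => Finset.mul_sum _ _ _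
          _ = ∑ j, ∑ q, Q p q * (R q j * x j) := Finset.sum_comm
          _ = ∑ j, (∑ t, Q p t * R t j) * x j := by
              refine Finset.sum_congr rfl fun j _ => ?_
              rw [Finset.sum_mul]
              exact Finset.sum_congr rfl fun t _ => by ring
      rw [hν, Measure.map_map hLmeas hymeas, hcomp, ← Measure.map_map hymeas hQmeas,
        hμinv Q hQ]
    -- the block as a Finset
    set idx : Fin d' → Fin d := fun a => ⟨i.val * d' + a.val, by
      have h1 : (i.val + 1) * d' ≤ (d / d') * d' :=
        Nat.mul_le_mul_right d' (Nat.succ_le_of_lt i.isLt)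
      have h2 : (d / d') * d' = d := Nat.div_mul_cancel hdvd
      have ha : a.val < d' := a.isLt
      calc i.val * d' + a.val < (i.val + 1) * d' := by nlinarith
        _ ≤ d := by rw [h2] at h1; exact h1⟩ with hidx
    have hidxinj : Function.Injective idx := by
      intro a b h
      have hval : i.1 * d' + a.1 = i.1 * d' + b.1 := congrArg Fin.val h
      exact Fin.ext (block_index_eq a.isLt b.isLt hval).2
    set Bs : Finset (Fin d) := Finset.image idx Finset.univ with hBs
    have hcard : Bs.card = d' := by
      rw [hBs, Finset.card_image_of_injective _ hidxinj, Finset.card_univ, Fintype.card_fin]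
    have hm1 : 1 ≤ Bs.card := by rw [hcard]; exact hd'pos
    have hSfeq : ∀ z : Fin d → ℝ, Sf Bs z = ∑ a : Fin d', (z (idx a))^2 := by
      intro z
      rw [hBs]
      unfold Sf
      rw [Finset.sum_image (fun a _ b _ h => hidxinj h)]
    -- event rewriting
    have hEvent : {R : Fin d → Fin d → ℝ | |Real.sqrt ((d : ℝ) / (d' : ℝ)) *
          Real.sqrt (∑ a, (∑ j, rowBlock d d' hdvd R i a j * x j) ^ 2) - 1| > ε}
        = y ⁻¹' {z : Fin d → ℝ |
            |Real.sqrt ((d : ℝ) / (d' : ℝ)) * Real.sqrt (Sf Bs z) - 1| > ε} := by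
      ext R
      simp only [Set.mem_setOf_eq, Set.mem_preimage]
      rw [hSfeq]
      rfl
    have hEm : MeasurableSet {z : Fin d → ℝ |
        |Real.sqrt ((d : ℝ) / (d' : ℝ)) * Real.sqrt (Sf Bs z) - 1| > ε} := by
      refine measurableSet_lt measurable_const ?_
      exact (((Real.continuous_sqrt.measurable.comp (measurable_Sf Bs)).const_mul
        _).sub measurable_const).abs
    have hmeasure : μ {R : Fin d → Fin d → ℝ | |Real.sqrt ((d : ℝ) / (d' : ℝ)) *
          Real.sqrt (∑ a, (∑ j, rowBlock d d' hdvd R i a j * x j) ^ 2) - 1| > ε}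
        = ν {z : Fin d → ℝ |
            |Real.sqrt ((d : ℝ) / (d' : ℝ)) * Real.sqrt (Sf Bs z) - 1| > ε} := by
      rw [hEvent, hν, Measure.map_apply hymeas hEm]
    -- inclusion into the two tails
    have hsub : {z : Fin d → ℝ |
          |Real.sqrt ((d : ℝ) / (d' : ℝ)) * Real.sqrt (Sf Bs z) - 1| > ε}
        ⊆ {z : Fin d → ℝ | (1+ε)^2 * ((Bs.card:ℝ)/(d:ℝ)) ≤ Sf Bs z}
          ∪ {z : Fin d → ℝ | Sf Bs z ≤ (1-ε)^2 * ((Bs.card:ℝ)/(d:ℝ))} := by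
      intro z hz
      simp only [Set.mem_setOf_eq, Set.mem_union] at *
      have hSf0 : 0 ≤ Sf Bs z := Finset.sum_nonneg fun u _ => sq_nonneg _
      set u : ℝ := Real.sqrt ((d : ℝ) / (d' : ℝ)) * Real.sqrt (Sf Bs z) with hu
      have hu0 : 0 ≤ u := mul_nonneg (Real.sqrt_nonneg _) (Real.sqrt_nonneg _)
      have hu2 : u^2 = ((d:ℝ)/(d':ℝ)) * Sf Bs z := by
        rw [hu, mul_pow, Real.sq_sqrt (by positivity), Real.sq_sqrt hSf0]
      rw [hcard]
      rcases lt_abs.mp hz with h | h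
      · -- u > 1 + ε
        left
        have h1 : (1+ε)^2 < u^2 := by nlinarith
        rw [hu2] at h1
        calc (1+ε)^2 * ((d':ℝ)/(d:ℝ)) ≤ (((d:ℝ)/(d':ℝ)) * Sf Bs z) * ((d':ℝ)/(d:ℝ)) :=
            mul_le_mul_of_nonneg_right h1.le (by positivity)
          _ = Sf Bs z := by field_simp
      · -- u < 1 - ε
        right
        have h1 : u^2 < (1-ε)^2 := by nlinarith
        rw [hu2] at h1
        calc Sf Bs z = (((d:ℝ)/(d':ℝ)) * Sf Bs z) * ((d':ℝ)/(d:ℝ)) := by field_simp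
          _ ≤ (1-ε)^2 * ((d':ℝ)/(d:ℝ)) :=
            mul_le_mul_of_nonneg_right h1.le (by positivity)
    -- union bound and tails
    have hUm : MeasurableSet {z : Fin d → ℝ | (1+ε)^2 * ((Bs.card:ℝ)/(d:ℝ)) ≤ Sf Bs z} :=
      measurableSet_le measurable_const (measurable_Sf Bs)
    have hLm : MeasurableSet {z : Fin d → ℝ | Sf Bs z ≤ (1-ε)^2 * ((Bs.card:ℝ)/(d:ℝ))} :=
      measurableSet_le (measurable_Sf Bs) measurable_const
    have hup := tail_upper (B := Bs) hsph hinv hdpos hm1 hε0 (by linarith : ε ≤ 1)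
    have hlow := tail_lower (B := Bs) hsph hinv hdpos hm1 hε0 (by linarith : ε < 1)
    have hle : ν {z : Fin d → ℝ |
          |Real.sqrt ((d : ℝ) / (d' : ℝ)) * Real.sqrt (Sf Bs z) - 1| > ε}
        ≤ ν {z : Fin d → ℝ | (1+ε)^2 * ((Bs.card:ℝ)/(d:ℝ)) ≤ Sf Bs z}
          + ν {z : Fin d → ℝ | Sf Bs z ≤ (1-ε)^2 * ((Bs.card:ℝ)/(d:ℝ))} :=
      le_trans (measure_mono hsub) (measure_union_le _ _)
    have htoReal : (ν {z : Fin d → ℝ |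
          |Real.sqrt ((d : ℝ) / (d' : ℝ)) * Real.sqrt (Sf Bs z) - 1| > ε}).toReal
        ≤ Real.exp (-((Bs.card:ℝ) * ε^2) / 2) + Real.exp (-((Bs.card:ℝ) * ε^2) / 2) := by
      have h2 := ENNReal.toReal_mono (by
        exact ENNReal.add_ne_top.mpr ⟨measure_ne_top ν _, measure_ne_top ν _⟩) hle
      rw [ENNReal.toReal_add (measure_ne_top ν _) (measure_ne_top ν _)] at h2
      exact le_trans h2 (add_le_add hup hlow)
    -- final numerics
    rw [hmeasure]
    have hfin : Real.exp (-((Bs.card:ℝ) * ε^2) / 2) ≤ δ^50 := by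
      rw [hcard]
      have hd'ε : 100 * Real.log (1/δ) ≤ (d':ℝ) * ε^2 := by
        calc 100 * Real.log (1/δ) = (100 * (ε^2)⁻¹ * Real.log (1/δ)) * ε^2 := by
              field_simp
          _ ≤ (d':ℝ) * ε^2 := mul_le_mul_of_nonneg_right hKd hεsq.le
      have hlogδ : Real.log (1/δ) = - Real.log δ := by rw [one_div, Real.log_inv]
      rw [hlogδ] at hd'ε
      have h1 : -((d':ℝ)*ε^2)/2 ≤ 50 * Real.log δ := by linarith
      calc Real.exp (-((d':ℝ)*ε^2)/2) ≤ Real.exp (50 * Real.log δ) := Real.exp_le_exp.mpr h1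
        _ = δ^50 := by
            rw [show (50:ℝ) * Real.log δ = Real.log (δ^50) by rw [Real.log_pow]; norm_num,
              Real.exp_log (by positivity)]
    have hnum : Real.exp (-((Bs.card:ℝ) * ε^2) / 2) + Real.exp (-((Bs.card:ℝ) * ε^2) / 2)
        < δ := by
      have h2 : δ^50 = δ * δ^49 := by ring
      have h3 : δ^49 ≤ (1/2:ℝ)^49 := pow_le_pow_left₀ hδ0.le hδ2.le 49
      have h4 : (2:ℝ) * ((1/2:ℝ)^49) < 1 := by norm_num
      calc Real.exp (-((Bs.card:ℝ) * ε^2) / 2) + Real.exp (-((Bs.card:ℝ) * ε^2) / 2)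
          ≤ δ^50 + δ^50 := add_le_add hfin hfin
        _ = 2 * (δ * δ^49) := by rw [h2]; ring
        _ ≤ 2 * (δ * (1/2:ℝ)^49) := by
            apply mul_le_mul_of_nonneg_left _ (by norm_num)
            exact mul_le_mul_of_nonneg_left h3 hδ0.le
        _ = δ * (2 * (1/2:ℝ)^49) := by ring
        _ < δ * 1 := by
            apply mul_lt_mul_of_pos_left h4 hδ0
        _ = δ := mul_one δ
    exact lt_of_le_of_lt htoReal hnum
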